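/- Let m > 1 be rational and a > 0, b rationals satisfying ((m²−1)/a)² = ((m²−1)/(2a) + 2bm)² + 4a²m² and 4m² = 4(m²−1)/a. Then 16b²m⁴ + 8bm⁵ − 3m⁶ + 16m⁴ − 32m² + 16 = 0, and consequently (m³−2m²+2)(m³+2m²−2) is the square of a rational. -/

import Mathlib

/-- Isosceles-triangle–rhombus pairs (Case 4.2.2.2): b satisfies the stated quadratic,
hence (m³−2m²+2)(m³+2m²−2) is a rational square. -/
theorem stmt15 (m a b : ℚ) (hm : 1 < m) (ha : 0 < a)
    (h1 : ((m^2-1)/a)^2 = ((m^2-1)/(2*a) + 2*b*m)^2 + 4*a^2*m^2)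
    (h2 : 4*m^2 = 4*(m^2-1)/a) :
    16*b^2*m^4 + 8*b*m^5 - 3*m^6 + 16*m^4 - 32*m^2 + 16 = 0 ∧
    ∃ w : ℚ, (m^3-2*m^2+2)*(m^3+2*m^2-2) = w^2 := by
  have ha' : a ≠ 0 := ne_of_gt ha
  have hm0 : (0:ℚ) < m := lt_trans one_pos hm
  have hm' : m ≠ 0 := ne_of_gt hm0
  have hmm : m^2 - 1 ≠ 0 := by nlinarith
  have h3 : a = (m^2-1)/m^2 := by
    field_simp at h2 ⊢
    linarith
  subst h3
  field_simp at h1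
  have key : 16*b^2*m^4 + 8*b*m^5 - 3*m^6 + 16*m^4 - 32*m^2 + 16 = 0 := by
    have hfac : m^2*(m^2-1)^2 * (16*b^2*m^4 + 8*b*m^5 - 3*m^6 + 16*m^4 - 32*m^2 + 16) = 0 := by
      linear_combination (-(m^2*(m^2-1)^2)) * h1
    have := mul_ne_zero (pow_ne_zero 2 hm') (pow_ne_zero 2 hmm)
    exact (mul_eq_zero.mp hfac).resolve_left this
  refine ⟨key, (4*b*m^2 + m^3)/2, ?_⟩
  have h4 : (4*b*m^2 + m^3)^2 = 4*((m^3-2*m^2+2)*(m^3+2*m^2-2)) := by nlinarith [key]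
  nlinarith [h4]
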